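/- For 0 ≤ i ≤ d-1 and 0 ≤ j ≤ d, the alternating partial binomial sum identity implied by the h-vector computation holds: ∑_{k=0}^{j} (-1)^{j-k} C(d-k, j-k) · (number of faces of B(i,d) of cardinality k) equals C(d,j) when j ≤ i+1, where the number of faces of cardinality k of B(i,d) equals the number of k-subsets σ of positions with sign choices whose filling has at most i switches; in particular for j ≤ i+1 this number of faces of cardinality k equals 2^k C(d,k) (all k-element faces of the cross-polytope are present). -/

import Mathlib

/-- The switch set of a word `u` of length `d` over the alphabet {x,y}. -/
def sw (d : ℕ) (u : ℕ → Bool) : Finset ℕ :=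
  (Finset.Ico 1 d).filter (fun j => u j ≠ u (j + 1))

/-- The facet of the boundary of the `d`-cross-polytope corresponding to the
word `u`. -/
def facetOf (d : ℕ) (u : ℕ → Bool) : Finset (ℕ × Bool) :=
  (Finset.Icc 1 d).image (fun j => (j, u j))

open Classical in
/-- The faces of `B(i,d)`. -/
noncomputable def facesB (i d : ℕ) : Finset (Finset (ℕ × Bool)) :=
  ((Finset.Icc 1 d ×ˢ (Finset.univ : Finset Bool)).powerset).filter
    (fun σ => ∃ u : ℕ → Bool, (sw d u).card ≤ i ∧ σ ⊆ facetOf d u)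

/-- `fB i d k`: the number of faces of `B(i,d)` of cardinality `k`. -/
noncomputable def fB (i d k : ℕ) : ℕ :=
  ((facesB i d).filter (fun σ => σ.card = k)).card

open Finset Classical

lemma injOn_fst_facetOf (d : ℕ) (u : ℕ → Bool) :
    Set.InjOn Prod.fst (facetOf d u : Set (ℕ × Bool)) := by
  intro p hp q hq h
  simp only [facetOf, coe_image, Set.mem_image] at hp hq
  obtain ⟨a, _, rfl⟩ := hp
  obtain ⟨b, _, rfl⟩ := hq
  simp only at h
  subst h; rfl

-- key value fact
lemma val_eq (σ : Finset (ℕ × Bool)) (hinj : Set.InjOn Prod.fst (σ : Set (ℕ × Bool)))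
    {j : ℕ} {b : Bool} (h : (j, b) ∈ σ) : b = decide ((j, true) ∈ σ) := by
  cases b with
  | true => simp [h]
  | false =>
    by_cases ht : (j, true) ∈ σ
    · have : ((j, true) : ℕ × Bool) = (j, false) :=
        hinj (Finset.mem_coe.2 ht) (Finset.mem_coe.2 h) rfl
      simp at this
    · simp [ht]

lemma exists_word (d i : ℕ) (σ : Finset (ℕ × Bool))
    (hσ : σ ⊆ Finset.Icc 1 d ×ˢ (univ : Finset Bool))
    (hinj : Set.InjOn Prod.fst (σ : Set (ℕ × Bool))) (hcard : σ.card ≤ i + 1) :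
    ∃ u : ℕ → Bool, (sw d u).card ≤ i ∧ σ ⊆ facetOf d u := by
  set S := σ.image Prod.fst with hS
  rcases S.eq_empty_or_nonempty with hSe | hSne
  · have hσe : σ = ∅ := by
      rw [← Finset.image_eq_empty (f := Prod.fst)]; exact hSe
    exact ⟨fun _ => true, by simp [sw], by simp [hσe]⟩
  · set val : ℕ → Bool := fun j => decide ((j, true) ∈ σ) with hval
    set nxt : ℕ → ℕ := fun m =>
      if h : ((S.filter (fun j => m ≤ j)).Nonempty) then (S.filter (fun j => m ≤ j)).min' h
      else S.max' hSne with hnxt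
    set u : ℕ → Bool := fun m => val (nxt m) with hu
    have hnxt_mem_self : ∀ j ∈ S, nxt j = j := by
      intro j hj
      have hne : (S.filter (fun x => j ≤ x)).Nonempty := ⟨j, by simp [hj]⟩
      simp only [hnxt, dif_pos hne]
      refine le_antisymm (min'_le _ _ (by simp [hj])) ?_
      have := (S.filter (fun x => j ≤ x)).min'_mem hne
      simp only [mem_filter] at this
      exact this.2
    -- switches only at S.erase max
    have hsw : sw d u ⊆ S.erase (S.max' hSne) := by
      intro j hj
      simp only [sw, mem_filter, mem_Ico] at hj
      obtain ⟨⟨hj1, hjd⟩, hne⟩ := hj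
      by_cases hjS : j ∈ S
      · rcases eq_or_ne j (S.max' hSne) with hmax | hmax
        · exfalso
          have h1 : nxt j = j := hnxt_mem_self j hjS
          have hemp : ¬ ((S.filter (fun x => j + 1 ≤ x)).Nonempty) := by
            rintro ⟨x, hx⟩
            simp only [mem_filter] at hx
            have hxm : x ≤ S.max' hSne := S.le_max' x hx.1
            have hjm : j + 1 ≤ x := hx.2
            omega

          have h2 : nxt (j+1) = S.max' hSne := by simp only [hnxt, dif_neg hemp]
          apply hne
          simp only [hu, h1, h2, ← hmax]
        · exact mem_erase.2 ⟨hmax, hjS⟩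
      · exfalso
        apply hne
        have hfeq : S.filter (fun x => j ≤ x) = S.filter (fun x => j + 1 ≤ x) := by
          apply Finset.filter_congr
          intro x hx
          constructor
          · intro h
            rcases Nat.eq_or_lt_of_le h with rfl | h
            · exact absurd hx hjS
            · exact h
          · omega
        have hn : nxt j = nxt (j+1) := by
          simp only [hnxt, hfeq]
        simp only [hu, hn]
    have hswcard : (sw d u).card ≤ i := by
      have h1 := Finset.card_le_card hsw
      have h2 : (S.erase (S.max' hSne)).card = S.card - 1 :=
        Finset.card_erase_of_mem (S.max'_mem hSne)
      have h3 : S.card ≤ σ.card := Finset.card_image_le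
      omega
    refine ⟨u, hswcard, ?_⟩
    intro p hp
    obtain ⟨j, b⟩ := p
    have hjIcc : j ∈ Finset.Icc 1 d := by
      have := hσ hp; simp only [mem_product] at this; exact this.1
    have hjS : j ∈ S := Finset.mem_image_of_mem _ hp
    have huj : u j = b := by
      rw [hu]
      simp only [hnxt_mem_self j hjS]
      exact (val_eq σ hinj hp).symm
    simp only [facetOf, mem_image]
    exact ⟨j, hjIcc, by rw [huj]⟩

lemma mem_trues (σ : Finset (ℕ × Bool)) (a : ℕ) :
    a ∈ (σ.filter (fun p => p.2 = true)).image Prod.fst ↔ (a, true) ∈ σ := by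
  simp only [mem_image, mem_filter]
  constructor
  · rintro ⟨⟨x, c⟩, ⟨hx, hc⟩, rfl⟩
    simp only at hc
    subst hc; exact hx
  · intro h; exact ⟨(a, true), ⟨h, rfl⟩, rfl⟩

open Classical in
lemma count_lemma (d k : ℕ) :
    (((Finset.Icc 1 d ×ˢ (Finset.univ : Finset Bool)).powerset).filter
      (fun σ : Finset (ℕ × Bool) => σ.card = k ∧ Set.InjOn Prod.fst ((σ : Finset (ℕ × Bool)) : Set (ℕ × Bool)))).card
      = 2 ^ k * d.choose k := by
  have hc : (((Finset.Icc 1 d).powersetCard k).sigma (fun S => S.powerset)).card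
      = 2 ^ k * d.choose k := by
    rw [Finset.card_sigma]
    have : ∀ S ∈ (Finset.Icc 1 d).powersetCard k, S.powerset.card = 2 ^ k := by
      intro S hS
      rw [Finset.card_powerset, (Finset.mem_powersetCard.1 hS).2]
    rw [Finset.sum_congr rfl this, Finset.sum_const, Finset.card_powersetCard,
      Nat.card_Icc, Nat.add_sub_cancel, smul_eq_mul, mul_comm]
  rw [← hc]
  refine (Finset.card_bij'
    (i := fun p _ => p.1.image (fun j => (j, decide (j ∈ p.2))))
    (j := fun σ _ => ⟨σ.image Prod.fst, (σ.filter (fun p => p.2 = true)).image Prod.fst⟩)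
    ?_ ?_ ?_ ?_).symm
  · rintro ⟨S, T⟩ hp
    simp only [Finset.mem_sigma, Finset.mem_powersetCard, Finset.mem_powerset] at hp
    obtain ⟨⟨hSsub, hScard⟩, hTS⟩ := hp
    have hinj : Function.Injective (fun j : ℕ => (j, decide (j ∈ T))) := by
      intro a b h
      exact congrArg Prod.fst h
    simp only [Finset.mem_filter, Finset.mem_powerset]
    refine ⟨?_, ?_, ?_⟩
    · intro p hp
      simp only [Finset.mem_image] at hp
      obtain ⟨j, hj, rfl⟩ := hp
      simp only [Finset.mem_product, Finset.mem_univ, and_true]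
      exact hSsub hj
    · rw [Finset.card_image_of_injective _ hinj, hScard]
    · intro p hp q hq h
      simp only [Finset.coe_image, Set.mem_image] at hp hq
      obtain ⟨a, ha, rfl⟩ := hp
      obtain ⟨b, hb, rfl⟩ := hq
      simp only at h
      subst h; rfl
  · intro σ hσ
    simp only [Finset.mem_filter, Finset.mem_powerset] at hσ
    obtain ⟨hsub, hcard, hinj⟩ := hσ
    simp only [Finset.mem_sigma, Finset.mem_powersetCard, Finset.mem_powerset]
    refine ⟨⟨?_, ?_⟩, ?_⟩
    · intro a ha
      simp only [Finset.mem_image] at ha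
      obtain ⟨p, hp, rfl⟩ := ha
      have := hsub hp
      simp only [Finset.mem_product] at this
      exact this.1
    · rw [Finset.card_image_of_injOn hinj, hcard]
    · exact Finset.image_subset_image (Finset.filter_subset _ _)
  · rintro ⟨S, T⟩ hp
    simp only [Finset.mem_sigma, Finset.mem_powersetCard, Finset.mem_powerset] at hp
    obtain ⟨⟨hSsub, hScard⟩, hTS⟩ := hp
    have h1 : (S.image (fun j => (j, decide (j ∈ T)))).image Prod.fst = S := by
      rw [Finset.image_image]
      exact Finset.image_id
    have h2 : ((S.image (fun j => (j, decide (j ∈ T)))).filter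
        (fun p => p.2 = true)).image Prod.fst = T := by
      ext a
      rw [mem_trues]
      simp only [Finset.mem_image]
      constructor
      · rintro ⟨x, hx, h⟩
        have hxa : x = a := congrArg Prod.fst h
        subst hxa
        have hd : decide (x ∈ T) = true := congrArg Prod.snd h
        simpa using hd
      · intro ha
        exact ⟨a, hTS ha, by simp [ha]⟩
    show (⟨_, _⟩ : Σ _ : Finset ℕ, Finset ℕ) = ⟨S, T⟩
    rw [h1, h2]
  · intro σ hσ
    simp only [Finset.mem_filter, Finset.mem_powerset] at hσ
    obtain ⟨hsub, hcard, hinj⟩ := hσ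
    have key : ∀ a : ℕ, decide (a ∈ (σ.filter (fun p => p.2 = true)).image Prod.fst)
        = decide ((a, true) ∈ σ) := by
      intro a; simp [mem_trues]
    show (σ.image Prod.fst).image
        (fun j => (j, decide (j ∈ (σ.filter (fun p => p.2 = true)).image Prod.fst))) = σ
    ext ⟨a, b⟩
    constructor
    · intro h
      obtain ⟨x, hx, hxe⟩ := Finset.mem_image.1 h
      rw [key] at hxe
      obtain ⟨⟨y, c⟩, hy, hyx⟩ := Finset.mem_image.1 hx
      simp only at hyx
      subst hyx
      rw [← val_eq σ hinj hy] at hxe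
      rwa [← hxe]
    · intro hab
      refine Finset.mem_image.2 ⟨a, Finset.mem_image_of_mem _ hab, ?_⟩
      rw [key, ← val_eq σ hinj hab]

open Classical in
lemma fB_eq (i d k : ℕ) (hk : k ≤ i + 1) :
    fB i d k = 2 ^ k * d.choose k := by
  rw [fB, ← count_lemma d k]
  congr 1
  ext σ
  simp only [facesB, Finset.mem_filter, Finset.mem_powerset]
  constructor
  · rintro ⟨⟨hsub, u, hu, hσu⟩, hcard⟩
    exact ⟨hsub, hcard, (injOn_fst_facetOf d u).mono (Finset.coe_subset.2 hσu)⟩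
  · rintro ⟨hsub, hcard, hinj⟩
    obtain ⟨u, hu1, hu2⟩ := exists_word d i σ hsub hinj (by omega)
    exact ⟨⟨hsub, u, hu1, hu2⟩, hcard⟩

/-- For `j ≤ i+1`, `h_j(B(i,d)) = ∑_{k=0}^{j} (-1)^{j-k} C(d-k, j-k) f_{k-1}`
equals `C(d,j)`; in particular `B(i,d)` has all `2^k C(d,k)` faces of
cardinality `k` of the cross-polytope for `k ≤ i+1`. -/
theorem stmt19 (d i j : ℕ) (hd : 1 ≤ d) (hi : i ≤ d - 1) (hj : j ≤ i + 1) :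
    (∑ k ∈ Finset.range (j + 1),
        (-1 : ℤ) ^ (j - k) * (d - k).choose (j - k) * fB i d k) =
      d.choose j ∧
    ∀ k ≤ i + 1, fB i d k = 2 ^ k * d.choose k := by
  refine ⟨?_, fun k hk => fB_eq i d k hk⟩
  have hjd : j ≤ d := by omega
  have key : ∀ k ∈ Finset.range (j + 1),
      (-1 : ℤ) ^ (j - k) * (d - k).choose (j - k) * fB i d k
      = (d.choose j : ℤ) * ((2 : ℤ) ^ k * (-1) ^ (j - k) * (j.choose k)) := by
    intro k hk
    rw [Finset.mem_range] at hk
    have hkj : k ≤ j := by omega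
    rw [fB_eq i d k (by omega)]
    have hz : ((d - k).choose (j - k) * d.choose k : ℕ) = d.choose j * j.choose k := by
      rw [mul_comm]; exact (Nat.choose_mul (n := d) hkj).symm
    have hz' : ((d - k).choose (j - k) : ℤ) * d.choose k = (d.choose j : ℤ) * j.choose k := by
      exact_mod_cast hz
    push_cast
    linear_combination ((-1 : ℤ) ^ (j - k) * 2 ^ k) * hz'
  rw [Finset.sum_congr rfl key, ← Finset.mul_sum, ← add_pow]
  norm_num
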